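/- Let 0 < λ < 1 and let a, b, g ∈ ℝ[z] be polynomials. Define F : ℝ³ → ℝ³ by F(x,y,z) = (A(z)·(x,y), λz), where A(z) is the 2×2 matrix with entries A₁₁ = λ − a(z)b(z)g(z), A₁₂ = −b(z)²g(z), A₂₁ = a(z)²g(z), A₂₂ = λ + a(z)b(z)g(z). Then for every (x,y,z) ∈ ℝ³, the iterates Fⁿ(x,y,z) converge to (0,0,0) as n → ∞. -/

import Mathlib

open Polynomial Filter

/-- A polynomial is bounded on a compact interval. -/
private lemma polyBound19 (q : Polynomial ℝ) (r : ℝ) :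
    ∃ C : ℝ, ∀ t ∈ Set.Icc (-r) r, |q.eval t| ≤ C := by
  obtain ⟨C, hC⟩ := (isCompact_Icc (a := -r) (b := r)).exists_bound_of_continuousOn
    (q.continuous_aeval.continuousOn (s := Set.Icc (-r) r))
  exact ⟨C, fun t ht => by simpa [Real.norm_eq_abs] using hC t ht⟩

/-- Factor out `t` from `q(l t) - q(t)`. -/
private lemma polyFactor19 (q : Polynomial ℝ) (l : ℝ) :
    ∃ ψ : Polynomial ℝ, ∀ t : ℝ, q.eval (l * t) = q.eval t + t * ψ.eval t := by
  have h : Polynomial.X ∣ (q.comp (Polynomial.C l * Polynomial.X) - q) := by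
    rw [Polynomial.X_dvd_iff]
    simp [Polynomial.coeff_zero_eq_eval_zero, Polynomial.eval_comp]
  obtain ⟨ψ, hψ⟩ := h
  refine ⟨ψ, fun t => ?_⟩
  have h2 := congrArg (Polynomial.eval t) hψ
  simp [Polynomial.eval_comp] at h2
  linarith

set_option maxHeartbeats 2000000 in
/-- Core analytic lemma: the sequence defined by the recurrences tends to the origin. -/
private lemma seqLemma19 (l : ℝ) (h1 : 0 < l) (h2 : l < 1) (a b g : Polynomial ℝ)
    (X Y Z : ℕ → ℝ)
    (hZr : ∀ n, Z (n + 1) = l * Z n)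
    (hXr : ∀ n, X (n + 1) =
      (l - a.eval (Z n) * b.eval (Z n) * g.eval (Z n)) * X n
        + (-(b.eval (Z n)) ^ 2 * g.eval (Z n)) * Y n)
    (hYr : ∀ n, Y (n + 1) =
      (a.eval (Z n)) ^ 2 * g.eval (Z n) * X n
        + (l + a.eval (Z n) * b.eval (Z n) * g.eval (Z n)) * Y n) :
    Filter.Tendsto (fun n => (X n, Y n, Z n)) Filter.atTop
      (nhds ((0 : ℝ), (0 : ℝ), (0 : ℝ))) := by
  have hl0 : (0 : ℝ) ≤ l := h1.le
  have hl1 : l ≤ 1 := h2.le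
  -- closed form for Z
  have hZn : ∀ n, Z n = l ^ n * Z 0 := by
    intro n
    induction n with
    | zero => simp
    | succ k ih => rw [hZr k, ih]; ring
  set r : ℝ := |Z 0| with hrdef
  have hr0 : 0 ≤ r := abs_nonneg _
  have hZabs : ∀ n, |Z n| ≤ l ^ n * r := by
    intro n
    rw [hZn n, abs_mul, abs_pow, abs_of_pos h1]
  have hZr' : ∀ n, |Z n| ≤ r := by
    intro n
    refine (hZabs n).trans ?_
    have : l ^ n ≤ 1 := pow_le_one₀ hl0 hl1
    nlinarith
  have hZmem : ∀ n, Z n ∈ Set.Icc (-r) r := by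
    intro n
    have := abs_le.mp (hZr' n)
    exact Set.mem_Icc.mpr this
  -- factor polynomials
  obtain ⟨P, hP⟩ := polyFactor19 a l
  obtain ⟨Q, hQ⟩ := polyFactor19 b l
  -- bounds
  obtain ⟨Ca, hCa⟩ := polyBound19 a r
  obtain ⟨Cb, hCb⟩ := polyBound19 b r
  obtain ⟨Cg, hCg⟩ := polyBound19 g r
  obtain ⟨Cp, hCp⟩ := polyBound19 P r
  obtain ⟨Cq, hCq⟩ := polyBound19 Q r
  set C : ℝ := max 1 (max (max Ca Cb) (max Cg (max Cp Cq))) with hCdef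
  have hC1 : (1 : ℝ) ≤ C := le_max_left _ _
  have hC0 : (0 : ℝ) < C := lt_of_lt_of_le one_pos hC1
  have hba : ∀ n, |a.eval (Z n)| ≤ C := fun n =>
    (hCa _ (hZmem n)).trans (le_trans (le_trans (le_max_left _ _) (le_max_left _ _)) (le_max_right _ _))
  have hbb : ∀ n, |b.eval (Z n)| ≤ C := fun n =>
    (hCb _ (hZmem n)).trans (le_trans (le_trans (le_max_right _ _) (le_max_left _ _)) (le_max_right _ _))
  have hbg : ∀ n, |g.eval (Z n)| ≤ C := fun n =>
    (hCg _ (hZmem n)).trans (le_trans (le_trans (le_max_left _ _) (le_max_right _ _)) (le_max_right _ _))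
  have hbp : ∀ n, |P.eval (Z n)| ≤ C := fun n =>
    (hCp _ (hZmem n)).trans (le_trans (le_trans (le_trans (le_max_left _ _) (le_max_right _ _)) (le_max_right _ _)) (le_max_right _ _))
  have hbq : ∀ n, |Q.eval (Z n)| ≤ C := fun n =>
    (hCq _ (hZmem n)).trans (le_trans (le_trans (le_trans (le_max_right _ _) (le_max_right _ _)) (le_max_right _ _)) (le_max_right _ _))
  -- the scalar t_n
  set T : ℕ → ℝ := fun n => a.eval (Z n) * X n + b.eval (Z n) * Y n with hTdef
  have hAup : ∀ n, a.eval (Z (n + 1)) = a.eval (Z n) + Z n * P.eval (Z n) := by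
    intro n; rw [hZr n]; exact hP (Z n)
  have hBup : ∀ n, b.eval (Z (n + 1)) = b.eval (Z n) + Z n * Q.eval (Z n) := by
    intro n; rw [hZr n]; exact hQ (Z n)
  -- recurrences in the convenient form
  have hX' : ∀ n, X (n + 1) = l * X n - g.eval (Z n) * b.eval (Z n) * T n := by
    intro n; rw [hXr n]; simp only [hTdef]; ring
  have hY' : ∀ n, Y (n + 1) = l * Y n + g.eval (Z n) * a.eval (Z n) * T n := by
    intro n; rw [hYr n]; simp only [hTdef]; ring
  have hTrec : ∀ n, T (n + 1) = l * T n
      + l * Z n * (P.eval (Z n) * X n + Q.eval (Z n) * Y n)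
      + g.eval (Z n) * Z n * (a.eval (Z n) * Q.eval (Z n) - b.eval (Z n) * P.eval (Z n)) * T n := by
    intro n
    simp only [hTdef]
    rw [hAup n, hBup n, hXr n, hYr n]
    ring
  -- abs bounds for one step
  have hXb : ∀ n, |X (n + 1)| ≤ l * |X n| + C * C * |T n| := by
    intro n
    calc |X (n + 1)| = |l * X n - g.eval (Z n) * b.eval (Z n) * T n| := by rw [hX' n]
      _ ≤ |l * X n| + |g.eval (Z n) * b.eval (Z n) * T n| := abs_sub _ _
      _ = l * |X n| + |g.eval (Z n)| * |b.eval (Z n)| * |T n| := by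
          rw [abs_mul, abs_mul, abs_mul, abs_of_pos h1]
      _ ≤ l * |X n| + C * C * |T n| := by
          have := hbg n; have := hbb n
          gcongr
  have hYb : ∀ n, |Y (n + 1)| ≤ l * |Y n| + C * C * |T n| := by
    intro n
    calc |Y (n + 1)| = |l * Y n + g.eval (Z n) * a.eval (Z n) * T n| := by rw [hY' n]
      _ ≤ |l * Y n| + |g.eval (Z n) * a.eval (Z n) * T n| := abs_add_le _ _
      _ = l * |Y n| + |g.eval (Z n)| * |a.eval (Z n)| * |T n| := by
          rw [abs_mul, abs_mul, abs_mul, abs_of_pos h1]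
      _ ≤ l * |Y n| + C * C * |T n| := by
          have := hbg n; have := hba n
          gcongr
  set c : ℝ := 2 * C * C * C * (r + 1) with hcdef
  have hc0 : 0 < c := by positivity
  have hCCC : C ≤ C * C * C := by
    nlinarith [mul_le_mul_of_nonneg_left hC1 hC0.le,
      mul_le_mul_of_nonneg_left hC1 (mul_nonneg hC0.le hC0.le)]
  have hcr : C * r ≤ c := by
    have h10 : C * r ≤ C * C * C * r := mul_le_mul_of_nonneg_right hCCC hr0
    have h11 : (0 : ℝ) ≤ C * C * C := by positivity
    have h12 : (0 : ℝ) ≤ C * C * C * r := by positivity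
    nlinarith
  have hcr2 : 2 * C * C * C * r ≤ c := by
    have h11 : (0 : ℝ) ≤ C * C * C := by positivity
    nlinarith
  have hTb : ∀ n, |T (n + 1)| ≤ l * |T n| + c * l ^ n * ((|X n| + |Y n|) + |T n|) := by
    intro n
    have hlp : (0 : ℝ) ≤ l ^ n := pow_nonneg hl0 n
    have e1 : |P.eval (Z n) * X n + Q.eval (Z n) * Y n| ≤ C * (|X n| + |Y n|) := by
      calc |P.eval (Z n) * X n + Q.eval (Z n) * Y n|
          ≤ |P.eval (Z n) * X n| + |Q.eval (Z n) * Y n| := abs_add_le _ _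
        _ = |P.eval (Z n)| * |X n| + |Q.eval (Z n)| * |Y n| := by rw [abs_mul, abs_mul]
        _ ≤ C * |X n| + C * |Y n| := by
            have := hbp n; have := hbq n; gcongr
        _ = C * (|X n| + |Y n|) := by ring
    have e2 : |l * Z n * (P.eval (Z n) * X n + Q.eval (Z n) * Y n)|
        ≤ c * l ^ n * (|X n| + |Y n|) := by
      rw [abs_mul, abs_mul, abs_of_pos h1]
      calc l * |Z n| * |P.eval (Z n) * X n + Q.eval (Z n) * Y n|
          ≤ 1 * (l ^ n * r) * (C * (|X n| + |Y n|)) := by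
            have := hZabs n; gcongr
        _ = (C * r) * l ^ n * (|X n| + |Y n|) := by ring
        _ ≤ c * l ^ n * (|X n| + |Y n|) := by
            have h3 : (0 : ℝ) ≤ |X n| + |Y n| := by positivity
            exact mul_le_mul_of_nonneg_right
              (mul_le_mul_of_nonneg_right hcr hlp) h3
    have e3 : |g.eval (Z n) * Z n * (a.eval (Z n) * Q.eval (Z n) - b.eval (Z n) * P.eval (Z n)) * T n|
        ≤ c * l ^ n * |T n| := by
      rw [abs_mul, abs_mul, abs_mul]
      have e4 : |a.eval (Z n) * Q.eval (Z n) - b.eval (Z n) * P.eval (Z n)| ≤ 2 * C * C := by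
        calc |a.eval (Z n) * Q.eval (Z n) - b.eval (Z n) * P.eval (Z n)|
            ≤ |a.eval (Z n) * Q.eval (Z n)| + |b.eval (Z n) * P.eval (Z n)| := abs_sub _ _
          _ = |a.eval (Z n)| * |Q.eval (Z n)| + |b.eval (Z n)| * |P.eval (Z n)| := by
              rw [abs_mul, abs_mul]
          _ ≤ C * C + C * C := by
              have := hba n; have := hbb n; have := hbp n; have := hbq n; gcongr
          _ = 2 * C * C := by ring
      calc |g.eval (Z n)| * |Z n| * |a.eval (Z n) * Q.eval (Z n) - b.eval (Z n) * P.eval (Z n)| * |T n|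
          ≤ C * (l ^ n * r) * (2 * C * C) * |T n| := by
            have := hbg n; have := hZabs n; gcongr
        _ = (2 * C * C * C * r) * l ^ n * |T n| := by ring
        _ ≤ c * l ^ n * |T n| := by
            exact mul_le_mul_of_nonneg_right
              (mul_le_mul_of_nonneg_right hcr2 hlp) (abs_nonneg _)
    calc |T (n + 1)| = |l * T n
          + l * Z n * (P.eval (Z n) * X n + Q.eval (Z n) * Y n)
          + g.eval (Z n) * Z n * (a.eval (Z n) * Q.eval (Z n) - b.eval (Z n) * P.eval (Z n)) * T n| := by
            rw [hTrec n]
      _ ≤ |l * T n + l * Z n * (P.eval (Z n) * X n + Q.eval (Z n) * Y n)|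
          + |g.eval (Z n) * Z n * (a.eval (Z n) * Q.eval (Z n) - b.eval (Z n) * P.eval (Z n)) * T n| :=
            abs_add_le _ _
      _ ≤ (|l * T n| + |l * Z n * (P.eval (Z n) * X n + Q.eval (Z n) * Y n)|)
          + |g.eval (Z n) * Z n * (a.eval (Z n) * Q.eval (Z n) - b.eval (Z n) * P.eval (Z n)) * T n| := by
            gcongr
            exact abs_add_le _ _
      _ ≤ (l * |T n| + c * l ^ n * (|X n| + |Y n|)) + c * l ^ n * |T n| := by
            have e0 : |l * T n| = l * |T n| := by rw [abs_mul, abs_of_pos h1]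
            rw [e0]
            gcongr
      _ = l * |T n| + c * l ^ n * ((|X n| + |Y n|) + |T n|) := by ring
  -- set up the constants for the main induction
  set μ : ℝ := (1 + l) / 2 with hμdef
  have hlμ : l < μ := by rw [hμdef]; linarith
  have hμ1 : μ < 1 := by rw [hμdef]; linarith
  have hμ0 : (0 : ℝ) < μ := lt_trans h1 hlμ
  set ε : ℝ := (μ - l) / (2 * (C * C)) with hεdef
  have hε0 : (0 : ℝ) < ε := by
    rw [hεdef]; apply div_pos (by linarith) (by positivity)
  obtain ⟨N, hN⟩ := exists_pow_lt_of_lt_one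
    (show (0 : ℝ) < ε * (μ - l) / (c * (1 + ε)) by
      apply div_pos (by nlinarith) (by nlinarith)) h2
  set M : ℝ := max (|X N| + |Y N|) (|T N| / ε) with hMdef
  set K : ℝ := M / μ ^ N + 1 with hKdef
  have hμN : (0 : ℝ) < μ ^ N := pow_pos hμ0 N
  have hM0 : 0 ≤ M := le_trans (by positivity) (le_max_left _ _)
  have hK0 : (0 : ℝ) < K := by
    rw [hKdef]; positivity
  have hMK : M ≤ K * μ ^ N := by
    rw [hKdef]
    have h13 : (M / μ ^ N) * μ ^ N = M := by field_simp
    nlinarith [h13, hμN]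
  -- the main induction
  have main : ∀ n, N ≤ n → |T n| ≤ ε * K * μ ^ n ∧ |X n| + |Y n| ≤ K * μ ^ n := by
    intro n hn
    induction n, hn using Nat.le_induction with
    | base =>
      constructor
      · have h3 : |T N| / ε ≤ M := le_max_right _ _
        have h4 : |T N| ≤ ε * M := by
          rw [div_le_iff₀ hε0] at h3; linarith [h3]
        calc |T N| ≤ ε * M := h4
          _ ≤ ε * (K * μ ^ N) := mul_le_mul_of_nonneg_left hMK hε0.le
          _ = ε * K * μ ^ N := by ring
      · exact le_trans (le_max_left _ _) hMK
    | succ n hn ih =>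
      obtain ⟨ihT, ihR⟩ := ih
      have hμn : (0 : ℝ) ≤ μ ^ n := (pow_pos hμ0 n).le
      have hKμn : (0 : ℝ) ≤ K * μ ^ n := by positivity
      have hlNn : l ^ n ≤ l ^ N := pow_le_pow_of_le_one hl0 hl1 hn
      have hlN : l ^ N * (c * (1 + ε)) < ε * (μ - l) := by
        have hpos : (0 : ℝ) < c * (1 + ε) := by positivity
        have h5 := (lt_div_iff₀ hpos).mp hN
        linarith
      constructor
      · calc |T (n + 1)| ≤ l * |T n| + c * l ^ n * ((|X n| + |Y n|) + |T n|) := hTb n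
          _ ≤ l * (ε * K * μ ^ n) + c * l ^ N * ((K * μ ^ n) + (ε * K * μ ^ n)) := by
              have step1 : l * |T n| ≤ l * (ε * K * μ ^ n) :=
                mul_le_mul_of_nonneg_left ihT hl0
              have step2 : c * l ^ n * ((|X n| + |Y n|) + |T n|)
                  ≤ c * l ^ N * ((K * μ ^ n) + (ε * K * μ ^ n)) := by
                have hsum : (|X n| + |Y n|) + |T n| ≤ (K * μ ^ n) + (ε * K * μ ^ n) := by
                  linarith
                have h6 : c * l ^ n ≤ c * l ^ N := mul_le_mul_of_nonneg_left hlNn hc0.le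
                have h7 : 0 ≤ (|X n| + |Y n|) + |T n| := by positivity
                exact mul_le_mul h6 hsum h7 (by positivity)
              linarith
          _ = (l * ε + c * l ^ N * (1 + ε)) * (K * μ ^ n) := by ring
          _ ≤ (ε * μ) * (K * μ ^ n) := by
              have key : l * ε + c * l ^ N * (1 + ε) ≤ ε * μ := by nlinarith [hlN]
              exact mul_le_mul_of_nonneg_right key hKμn
          _ = ε * K * μ ^ (n + 1) := by ring
      · calc |X (n + 1)| + |Y (n + 1)|
            ≤ (l * |X n| + C * C * |T n|) + (l * |Y n| + C * C * |T n|) :=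
              add_le_add (hXb n) (hYb n)
          _ = l * (|X n| + |Y n|) + 2 * (C * C) * |T n| := by ring
          _ ≤ l * (K * μ ^ n) + 2 * (C * C) * (ε * K * μ ^ n) := by
              have step1 : l * (|X n| + |Y n|) ≤ l * (K * μ ^ n) :=
                mul_le_mul_of_nonneg_left ihR hl0
              have step2 : 2 * (C * C) * |T n| ≤ 2 * (C * C) * (ε * K * μ ^ n) :=
                mul_le_mul_of_nonneg_left ihT (by positivity)
              linarith
          _ = (l + 2 * (C * C) * ε) * (K * μ ^ n) := by ring
          _ = K * μ ^ (n + 1) := by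
              have : l + 2 * (C * C) * ε = μ := by
                rw [hεdef]; field_simp; ring
              rw [this]; ring
  -- limits
  have hμlim : Filter.Tendsto (fun n => K * μ ^ n) Filter.atTop (nhds 0) := by
    have := (tendsto_pow_atTop_nhds_zero_of_lt_one hμ0.le hμ1).const_mul K
    simpa using this
  have hXlim : Filter.Tendsto X Filter.atTop (nhds 0) := by
    apply squeeze_zero_norm' _ hμlim
    filter_upwards [Filter.eventually_atTop.mpr ⟨N, fun n hn => (main n hn).2⟩] with n hn
    have := abs_nonneg (Y n)
    simp only [Real.norm_eq_abs]
    linarith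
  have hYlim : Filter.Tendsto Y Filter.atTop (nhds 0) := by
    apply squeeze_zero_norm' _ hμlim
    filter_upwards [Filter.eventually_atTop.mpr ⟨N, fun n hn => (main n hn).2⟩] with n hn
    have := abs_nonneg (X n)
    simp only [Real.norm_eq_abs]
    linarith
  have hZlim : Filter.Tendsto Z Filter.atTop (nhds 0) := by
    have h8 : Filter.Tendsto (fun n : ℕ => l ^ n * Z 0) Filter.atTop (nhds 0) := by
      have := (tendsto_pow_atTop_nhds_zero_of_lt_one hl0 h2).mul_const (Z 0)
      simpa using this
    have : Z = fun n => l ^ n * Z 0 := funext hZn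
    rw [this]
    exact h8
  exact hXlim.prodMk_nhds (hYlim.prodMk_nhds hZlim)

/-- Theorem DY1, c = d = 0: the origin is a global attractor of the
discrete dynamical system generated by F(x,y,z) = (A(z)(x,y), λz). -/
theorem stmt19 (l : ℝ) (h1 : 0 < l) (h2 : l < 1) (a b g : Polynomial ℝ)
    (F : ℝ × ℝ × ℝ → ℝ × ℝ × ℝ)
    (hF : ∀ p : ℝ × ℝ × ℝ, F p =
      ((l - a.eval p.2.2 * b.eval p.2.2 * g.eval p.2.2) * p.1
         + (-(b.eval p.2.2) ^ 2 * g.eval p.2.2) * p.2.1,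
       (a.eval p.2.2) ^ 2 * g.eval p.2.2 * p.1
         + (l + a.eval p.2.2 * b.eval p.2.2 * g.eval p.2.2) * p.2.1,
       l * p.2.2)) :
    ∀ p : ℝ × ℝ × ℝ,
      Filter.Tendsto (fun n => F^[n] p) Filter.atTop (nhds ((0 : ℝ), (0 : ℝ), (0 : ℝ))) := by
  intro p
  have hstep : ∀ n : ℕ, F^[n + 1] p = F (F^[n] p) := fun n =>
    Function.iterate_succ_apply' F n p
  have key := seqLemma19 l h1 h2 a b g
    (fun n => (F^[n] p).1) (fun n => (F^[n] p).2.1) (fun n => (F^[n] p).2.2)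
    (fun n => by
      show (F^[n + 1] p).2.2 = l * (F^[n] p).2.2
      rw [hstep n, hF])
    (fun n => by
      show (F^[n + 1] p).1 = _
      rw [hstep n, hF])
    (fun n => by
      show (F^[n + 1] p).2.1 = _
      rw [hstep n, hF])
  exact key
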